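/- Let μ be a finite Borel measure on ℝ⁴ with μ ≠ 0, such that μ is supported on the unit sphere S³ = {x ∈ ℝ⁴ : ‖x‖ = 1} (that is, μ(ℝ⁴ \ S³) = 0) and μ has no atoms (μ({x}) = 0 for every x ∈ ℝ⁴). Then there exists a ∈ ℝ⁴ with ‖a‖ < 1 such that the vector-valued integral ∫ ψ_a(x) dμ(x) equals 0 ∈ ℝ⁴, where ψ_a(y) = a + ((1 − ‖a‖²)/(1 + 2⟨a,y⟩ + ‖a‖²))·(y + a). -/

import Mathlib

open MeasureTheory Metric
open scoped RealInnerProductSpace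

noncomputable section BalancingAux

local notation "V" => EuclideanSpace ℝ (Fin 4)

def Dfun (a x : V) : ℝ := 1 + 2 * ⟪a, x⟫ + ‖a‖ ^ 2

lemma Dfun_eq (a x : V) (hx : ‖x‖ = 1) : Dfun a x = ‖x + a‖ ^ 2 := by
  rw [Dfun, norm_add_sq_real, hx, real_inner_comm]
  ring

lemma Dfun_ge (a x : V) (hx : ‖x‖ = 1) : (1 - ‖a‖) ^ 2 ≤ Dfun a x := by
  rw [Dfun_eq a x hx]
  have h := abs_norm_sub_norm_le x (-a)
  rw [sub_neg_eq_add, norm_neg, hx] at h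
  nlinarith [abs_nonneg (1 - ‖a‖), le_abs_self (1 - ‖a‖), neg_abs_le (1 - ‖a‖)]

lemma Dfun_le (a x : V) (hx : ‖x‖ = 1) (ha : ‖a‖ ≤ 1) : Dfun a x ≤ 4 := by
  rw [Dfun_eq a x hx]
  have := norm_add_le x a
  nlinarith [norm_nonneg (x+a)]

lemma Dfun_pos (a x : V) (hx : ‖x‖ = 1) (ha : ‖a‖ < 1) : 0 < Dfun a x :=
  lt_of_lt_of_le (by nlinarith) (Dfun_ge a x hx)

end BalancingAux

noncomputable section B2
local notation "V" => EuclideanSpace ℝ (Fin 4)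

lemma hasFDerivAt_Dfun (x a₀ : V) :
    HasFDerivAt (fun a : V => Dfun a x) ((2:ℝ) • innerSL ℝ (x + a₀)) a₀ := by
  have h1 : HasFDerivAt (fun a : V => 1 + 2 * ⟪a, x⟫ + ‖a‖ ^ 2)
      (((2:ℝ) • innerSL ℝ x) +
        (2 • (innerSL ℝ a₀).comp (ContinuousLinearMap.id ℝ (EuclideanSpace ℝ (Fin 4))))) a₀ := by
    have hinner : HasFDerivAt (fun a : V => ⟪a, x⟫) (innerSL ℝ x) a₀ := by
      have : (fun a : V => ⟪a, x⟫) = fun a : V => (innerSL ℝ x) a := by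
        funext a; exact real_inner_comm x a
      rw [this]
      exact (innerSL ℝ x).hasFDerivAt
    exact ((hinner.const_mul 2).const_add 1).add (hasFDerivAt_id a₀).norm_sq
  have : (((2:ℝ) • innerSL ℝ x) +
        (2 • (innerSL ℝ a₀).comp (ContinuousLinearMap.id ℝ (EuclideanSpace ℝ (Fin 4)))))
      = (2:ℝ) • innerSL ℝ (x + a₀) := by
    ext v
    simp [two_smul, inner_add_left]
    try ring
  rw [this] at h1
  exact h1

def Fprime (a x : V) : V →L[ℝ] ℝ := (2 / Dfun a x) • innerSL ℝ (x + a)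

lemma hasFDerivAt_logD (x a₀ : V) (h : Dfun a₀ x ≠ 0) :
    HasFDerivAt (fun a : V => Real.log (Dfun a x)) (Fprime a₀ x) a₀ := by
  have := (hasFDerivAt_Dfun x a₀).log h
  refine this.congr_fderiv (Eq.symm ?_)
  rw [Fprime, smul_smul]
  congr 1
  rw [div_eq_mul_inv, mul_comm]

lemma norm_Fprime_le (a x : V) (hx : ‖x‖ = 1) (ha : ‖a‖ < 1) {δ : ℝ} (hδ : 0 < δ)
    (hδa : δ ≤ 1 - ‖a‖) : ‖Fprime a x‖ ≤ 4 / δ ^ 2 := by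
  have hD : δ ^ 2 ≤ Dfun a x := le_trans (by nlinarith) (Dfun_ge a x hx)
  have hDpos : 0 < Dfun a x := lt_of_lt_of_le (by positivity) hD
  apply ContinuousLinearMap.opNorm_le_bound _ (by positivity)
  intro v
  have hv : Fprime a x v = (2 / Dfun a x) * ⟪x + a, v⟫ := by
    simp [Fprime, inner_add_left, mul_add]
  rw [hv]
  have hcs : |⟪x + a, v⟫| ≤ ‖x + a‖ * ‖v‖ := abs_real_inner_le_norm _ _
  have hxa : ‖x + a‖ ≤ 2 := by
    calc ‖x + a‖ ≤ ‖x‖ + ‖a‖ := norm_add_le x a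
    _ ≤ 2 := by rw [hx]; linarith
  have hfrac : 0 < 2 / Dfun a x := by positivity
  rw [Real.norm_eq_abs, abs_mul, abs_of_pos hfrac]
  have h2 : 2 / Dfun a x ≤ 2 / δ ^ 2 :=
    div_le_div_of_nonneg_left (by norm_num) (by positivity) hD
  have hvn : (0:ℝ) ≤ ‖v‖ := norm_nonneg v
  have habs : |⟪x + a, v⟫| ≤ 2 * ‖v‖ := le_trans hcs (by nlinarith [norm_nonneg (x+a), abs_nonneg ⟪x+a,v⟫])
  calc 2 / Dfun a x * |⟪x + a, v⟫| ≤ (2 / δ ^ 2) * (2 * ‖v‖) := by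
        apply mul_le_mul h2 habs (abs_nonneg _) (le_of_lt (by positivity))
  _ = 4 / δ ^ 2 * ‖v‖ := by ring

end B2


set_option linter.unusedSectionVars false
noncomputable section B3
local notation "V" => EuclideanSpace ℝ (Fin 4)

variable {μ : Measure (EuclideanSpace ℝ (Fin 4))} [IsFiniteMeasure μ]

lemma continuous_Dfun (a : V) : Continuous (fun x : V => Dfun a x) := by
  unfold Dfun
  have : Continuous fun x : V => ⟪a, x⟫ := continuous_const.inner continuous_id
  continuity

lemma aesm_logD (a : V) : AEStronglyMeasurable (fun x : V => Real.log (Dfun a x)) μ :=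
  (Real.measurable_log.comp (continuous_Dfun a).measurable).aestronglyMeasurable

lemma integrable_logD (hs : ∀ᵐ x ∂μ, ‖x‖ = 1) (a : V) (ha : ‖a‖ < 1) :
    Integrable (fun x : V => Real.log (Dfun a x)) μ := by
  apply Integrable.mono' (integrable_const (|Real.log ((1 - ‖a‖) ^ 2)| + |Real.log 4|))
    (aesm_logD a)
  filter_upwards [hs] with x hx
  have hpos : (0:ℝ) < (1 - ‖a‖) ^ 2 := by nlinarith
  have h1 : Real.log ((1 - ‖a‖) ^ 2) ≤ Real.log (Dfun a x) :=
    Real.log_le_log hpos (Dfun_ge a x hx)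
  have h2 : Real.log (Dfun a x) ≤ Real.log 4 :=
    Real.log_le_log (Dfun_pos a x hx ha) (Dfun_le a x hx ha.le)
  rw [Real.norm_eq_abs]
  rcases abs_cases (Real.log ((1 - ‖a‖) ^ 2)) with ⟨e1, _⟩ | ⟨e1, _⟩ <;>
    rcases abs_cases (Real.log 4) with ⟨e2, _⟩ | ⟨e2, _⟩ <;>
    rcases abs_cases (Real.log (Dfun a x)) with ⟨e3, _⟩ | ⟨e3, _⟩ <;> linarith

lemma aesm_Fprime (a : V) : AEStronglyMeasurable (fun x : V => Fprime a x) μ := by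
  unfold Fprime
  apply AEStronglyMeasurable.fun_smul
  · exact (measurable_const.div (continuous_Dfun a).measurable).aestronglyMeasurable
  · exact ((innerSL ℝ).continuous.comp (continuous_id.add continuous_const)).aestronglyMeasurable

lemma integrable_Fprime (hs : ∀ᵐ x ∂μ, ‖x‖ = 1) (a : V) (ha : ‖a‖ < 1) :
    Integrable (fun x : V => Fprime a x) μ := by
  apply Integrable.mono' (integrable_const (4 / (1 - ‖a‖) ^ 2)) (aesm_Fprime a)
  filter_upwards [hs] with x hx
  exact norm_Fprime_le a x hx ha (by linarith) le_rfl

lemma hasFDerivAt_integral_logD (hs : ∀ᵐ x ∂μ, ‖x‖ = 1) (a₀ : V) (ha₀ : ‖a₀‖ < 1) :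
    HasFDerivAt (fun a : V => ∫ x, Real.log (Dfun a x) ∂μ) (∫ x, Fprime a₀ x ∂μ) a₀ := by
  set δ : ℝ := (1 - ‖a₀‖) / 2 with hδdef
  have hδ : 0 < δ := by rw [hδdef]; linarith
  have hball : ∀ a : V, a ∈ Metric.ball a₀ δ → ‖a‖ < 1 ∧ δ ≤ 1 - ‖a‖ := by
    intro a haδ
    rw [Metric.mem_ball, dist_eq_norm] at haδ
    have : ‖a‖ ≤ ‖a₀‖ + ‖a - a₀‖ := by
      calc ‖a‖ = ‖a₀ + (a - a₀)‖ := by rw [add_sub_cancel]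
      _ ≤ ‖a₀‖ + ‖a - a₀‖ := norm_add_le _ _
    constructor <;> [skip; skip] <;> rw [hδdef] at * <;> [linarith; linarith]
  apply hasFDerivAt_integral_of_dominated_of_fderiv_le (s := Metric.ball a₀ δ)
    (bound := fun _ => 4 / δ ^ 2) (Metric.ball_mem_nhds a₀ hδ)
  · exact Filter.Eventually.of_forall fun a => aesm_logD a
  · exact integrable_logD hs a₀ ha₀
  · exact aesm_Fprime a₀
  · filter_upwards [hs] with x hx a haδ
    exact norm_Fprime_le a x hx (hball a haδ).1 hδ (hball a haδ).2
  · exact integrable_const _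
  · filter_upwards [hs] with x hx a haδ
    exact hasFDerivAt_logD x a (ne_of_gt (Dfun_pos a x hx (hball a haδ).1))

end B3

set_option linter.unusedSectionVars false
noncomputable section B4
local notation "V" => EuclideanSpace ℝ (Fin 4)

variable {μ : Measure (EuclideanSpace ℝ (Fin 4))} [IsFiniteMeasure μ]

def Efun (μ : Measure (EuclideanSpace ℝ (Fin 4))) (a : V) : ℝ :=
  (μ Set.univ).toReal * Real.log (1 - ‖a‖ ^ 2) - ∫ x, Real.log (Dfun a x) ∂μ

lemma hasFDerivAt_Efun (hs : ∀ᵐ x ∂μ, ‖x‖ = 1) (a₀ : V) (ha₀ : ‖a₀‖ < 1) :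
    HasFDerivAt (Efun μ)
      ((((μ Set.univ).toReal * (-2) / (1 - ‖a₀‖ ^ 2)) • innerSL ℝ a₀)
        - ∫ x, Fprime a₀ x ∂μ) a₀ := by
  have h1 : HasFDerivAt (fun a : V => 1 - ‖a‖ ^ 2)
      (-(2 • (innerSL ℝ a₀).comp (ContinuousLinearMap.id ℝ (EuclideanSpace ℝ (Fin 4))))) a₀ :=
    ((hasFDerivAt_id a₀).norm_sq).const_sub 1
  have hne : 1 - ‖a₀‖ ^ 2 ≠ 0 := by nlinarith [norm_nonneg a₀]
  have h2 := (h1.log hne).const_mul ((μ Set.univ).toReal)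
  have h3 := h2.sub (hasFDerivAt_integral_logD hs a₀ ha₀)
  refine h3.congr_fderiv (Eq.symm ?_)
  congr 1
  ext v
  simp [two_smul, smul_smul]
  ring

lemma integral_psi_eq_zero_of_isLocalMax (hs : ∀ᵐ x ∂μ, ‖x‖ = 1) (a : V) (ha : ‖a‖ < 1)
    (hmax : IsLocalMax (Efun μ) a) :
    ∫ x, (a + ((1 - ‖a‖ ^ 2) / (Dfun a x)) • (x + a)) ∂μ = 0 := by
  set M := (μ Set.univ).toReal with hM
  have hG := hmax.hasFDerivAt_eq_zero (hasFDerivAt_Efun hs a ha)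
  have hδ : (0:ℝ) < (1 - ‖a‖) ^ 2 := by nlinarith
  -- integrability of the smul part
  have haesm : AEStronglyMeasurable (fun x : V => ((1 - ‖a‖ ^ 2) / Dfun a x) • (x + a)) μ := by
    apply AEStronglyMeasurable.fun_smul
    · exact (measurable_const.div (continuous_Dfun a).measurable).aestronglyMeasurable
    · exact (continuous_id.add continuous_const).aestronglyMeasurable
  have hbnd : Integrable (fun x : V => ((1 - ‖a‖ ^ 2) / Dfun a x) • (x + a)) μ := by
    apply Integrable.mono' (integrable_const ((1 - ‖a‖ ^ 2) / (1 - ‖a‖) ^ 2 * 2)) haesm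
    filter_upwards [hs] with x hx
    rw [norm_smul, Real.norm_eq_abs]
    have hD := Dfun_ge a x hx
    have hDpos := Dfun_pos a x hx ha
    have hnum : (0:ℝ) < 1 - ‖a‖ ^ 2 := by nlinarith [norm_nonneg a]
    have h1 : |(1 - ‖a‖ ^ 2) / Dfun a x| ≤ (1 - ‖a‖ ^ 2) / (1 - ‖a‖) ^ 2 := by
      rw [abs_of_pos (div_pos hnum hDpos)]
      exact div_le_div_of_nonneg_left hnum.le hδ hD
    have h2 : ‖x + a‖ ≤ 2 := by
      calc ‖x + a‖ ≤ ‖x‖ + ‖a‖ := norm_add_le x a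
      _ ≤ 2 := by rw [hx]; linarith
    exact mul_le_mul h1 h2 (norm_nonneg _) (by positivity)
  have hψint : Integrable (fun x : V => a + ((1 - ‖a‖ ^ 2) / Dfun a x) • (x + a)) μ :=
    (integrable_const a).add hbnd
  apply integral_eq_zero_of_forall_integral_inner_eq_zero ℝ _ hψint
  intro c
  -- evaluate the vanishing derivative at c
  have h0 : ((M * (-2) / (1 - ‖a‖ ^ 2)) • innerSL ℝ a - ∫ x, Fprime a x ∂μ) c = (0 : ℝ) := by
    rw [hG]; rfl
  rw [ContinuousLinearMap.sub_apply, ContinuousLinearMap.smul_apply,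
    ContinuousLinearMap.integral_apply (integrable_Fprime hs a ha)] at h0
  rw [smul_eq_mul] at h0
  have hFc : ∀ x : V, ((1 - ‖a‖ ^ 2) / Dfun a x) * ⟪c, x + a⟫
      = ((1 - ‖a‖ ^ 2) / 2) * (Fprime a x c) := by
    intro x
    have : Fprime a x c = (2 / Dfun a x) * ⟪x + a, c⟫ := by
      simp [Fprime, inner_add_left, mul_add]
    rw [this, real_inner_comm c (x + a)]
    ring
  have hFcint : Integrable (fun x : V => Fprime a x c) μ :=
    (integrable_Fprime hs a ha).apply_continuousLinearMap c
  have expand : ∀ x : V, ⟪c, a + ((1 - ‖a‖ ^ 2) / Dfun a x) • (x + a)⟫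
      = ⟪c, a⟫ + ((1 - ‖a‖ ^ 2) / 2) * (Fprime a x c) := by
    intro x
    rw [inner_add_right, real_inner_smul_right, hFc x]
  calc ∫ x, ⟪c, a + ((1 - ‖a‖ ^ 2) / Dfun a x) • (x + a)⟫ ∂μ
      = ∫ x, (⟪c, a⟫ + ((1 - ‖a‖ ^ 2) / 2) * (Fprime a x c)) ∂μ := by
        exact integral_congr_ae (Filter.Eventually.of_forall expand)
  _ = M * ⟪c, a⟫ + ((1 - ‖a‖ ^ 2) / 2) * ∫ x, Fprime a x c ∂μ := by
        rw [integral_add (integrable_const _) (hFcint.const_mul _), integral_const,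
          integral_const_mul, smul_eq_mul]
        rfl
  _ = 0 := by
        have hInt : ∫ x, Fprime a x c ∂μ = M * (-2) / (1 - ‖a‖ ^ 2) * ⟪a, c⟫ := by
          rw [← sub_eq_zero]
          simp only [innerSL_apply_apply] at h0
          linarith [h0]
        rw [hInt, real_inner_comm c a]
        have hne : 1 - ‖a‖ ^ 2 ≠ 0 := by nlinarith [norm_nonneg a]
        field_simp
        ring

end B4

noncomputable section B5
local notation "V" => EuclideanSpace ℝ (Fin 4)

variable {μ : Measure (EuclideanSpace ℝ (Fin 4))} [IsFiniteMeasure μ]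

lemma exists_small_ball_radius (hμ : μ ≠ 0)
    (hsupp : μ ({x : V | ‖x‖ = 1}ᶜ) = 0) (hatom : ∀ x : V, μ {x} = 0) :
    ∃ r₀ : ℝ, 0 < r₀ ∧ r₀ < 2 ∧
      ∀ c : V, (μ (Metric.closedBall c r₀)).toReal ≤ (μ Set.univ).toReal / 4 := by
  set M := (μ Set.univ).toReal with hMdef
  have hM : 0 < M :=
    ENNReal.toReal_pos (Measure.measure_univ_pos.mpr hμ).ne' (measure_ne_top μ _)
  by_contra hcon
  push_neg at hcon
  have hn : ∀ n : ℕ, ∃ c : V, M / 4 < (μ (Metric.closedBall c (1/(n+1)))).toReal := by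
    intro n
    refine hcon (1/(n+1)) (by positivity) ?_
    have h1 : (1:ℝ) ≤ (n:ℝ) + 1 := by exact_mod_cast Nat.one_le_iff_ne_zero.mpr (Nat.succ_ne_zero n)
    rw [div_lt_iff₀ (by positivity)]
    nlinarith
  choose c hc using hn
  have hone : ∀ n : ℕ, (1:ℝ)/(n+1) ≤ 1 := by
    intro n
    rw [div_le_one (by positivity)]
    have : (0:ℝ) ≤ (n:ℝ) := Nat.cast_nonneg n
    linarith
  have hcb : ∀ n, c n ∈ Metric.closedBall (0:V) 2 := by
    intro n
    by_contra hcn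
    rw [Metric.mem_closedBall, dist_zero_right] at hcn
    push_neg at hcn
    have hsub : Metric.closedBall (c n) (1/(n+1)) ⊆ {x : V | ‖x‖ = 1}ᶜ := by
      intro y hy
      rw [Metric.mem_closedBall, dist_eq_norm] at hy
      intro hy1
      simp only [Set.mem_setOf_eq] at hy1
      have h2 : ‖c n‖ ≤ ‖y‖ + ‖y - c n‖ := by
        calc ‖c n‖ = ‖y - (y - c n)‖ := by rw [sub_sub_cancel]
        _ ≤ ‖y‖ + ‖y - c n‖ := norm_sub_le _ _
      rw [hy1] at h2
      have := hone n
      linarith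
    have h3 : μ (Metric.closedBall (c n) (1/(n+1))) ≤ μ ({x : V | ‖x‖ = 1}ᶜ) :=
      measure_mono hsub
    rw [hsupp] at h3
    have h4 : μ (Metric.closedBall (c n) (1/(n+1))) = 0 := le_antisymm h3 (zero_le')
    have h5 := hc n
    rw [h4] at h5
    simp at h5
    linarith
  obtain ⟨x, -, φ, hφ, hlim⟩ :=
    (isCompact_closedBall (0:V) 2).tendsto_subseq hcb
  have key : ∀ ε : ℝ, 0 < ε → ENNReal.ofReal (M/4) ≤ μ (Metric.closedBall x ε) := by
    intro ε hε
    obtain ⟨N₁, hN₁⟩ := (Metric.tendsto_atTop.mp hlim) (ε/2) (by linarith)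
    obtain ⟨n₂, hn₂⟩ := exists_nat_one_div_lt (show (0:ℝ) < ε/2 by linarith)
    set n := max N₁ n₂ with hndef
    have h1 : dist (c (φ n)) x < ε/2 := hN₁ n (le_max_left _ _)
    have h2 : (1:ℝ)/(φ n + 1) < ε/2 := by
      have hmono : (n₂:ℝ) + 1 ≤ (φ n : ℝ) + 1 := by
        have : n₂ ≤ φ n := le_trans (le_max_right N₁ n₂) (hφ.le_apply)
        exact_mod_cast Nat.succ_le_succ this
      calc (1:ℝ)/(φ n + 1) ≤ 1/(n₂+1) := by
            apply div_le_div_of_nonneg_left (by norm_num) (by positivity) hmono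
      _ < ε/2 := hn₂
    have hsub : Metric.closedBall (c (φ n)) (1/(φ n + 1)) ⊆ Metric.closedBall x ε := by
      intro y hy
      rw [Metric.mem_closedBall] at hy ⊢
      calc dist y x ≤ dist y (c (φ n)) + dist (c (φ n)) x := dist_triangle _ _ _
      _ ≤ 1/(φ n + 1) + ε/2 := by linarith [hy, h1.le]
      _ ≤ ε := by linarith
    refine le_trans ?_ (measure_mono hsub)
    exact ENNReal.ofReal_le_of_le_toReal (hc (φ n)).le
  have hanti : Antitone fun n : ℕ => Metric.closedBall x (1/(n+1)) := by
    intro m n hmn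
    apply Metric.closedBall_subset_closedBall
    have h1 : (m:ℝ) + 1 ≤ (n:ℝ) + 1 := by exact_mod_cast Nat.succ_le_succ hmn
    exact div_le_div_of_nonneg_left (by norm_num) (by positivity) h1
  have h3 : Filter.Tendsto (fun n : ℕ => μ (Metric.closedBall x (1/(n+1)))) Filter.atTop
      (nhds (μ (⋂ n : ℕ, Metric.closedBall x (1/(n+1))))) := by
    apply tendsto_measure_iInter_atTop
      (fun n => (Metric.isClosed_closedBall.measurableSet).nullMeasurableSet) hanti
      ⟨0, measure_ne_top μ _⟩
  have hInter : (⋂ n : ℕ, Metric.closedBall x (1/(n+1))) = {x} := by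
    ext y
    simp only [Set.mem_iInter, Metric.mem_closedBall, Set.mem_singleton_iff]
    constructor
    · intro hy
      have h0 : dist y x ≤ 0 := by
        apply ge_of_tendsto tendsto_one_div_add_atTop_nhds_zero_nat
        exact Filter.Eventually.of_forall fun n => hy n
      exact dist_le_zero.mp h0
    · intro h; subst h
      intro n
      rw [dist_self]
      positivity
  rw [hInter] at h3
  have hfin : ENNReal.ofReal (M/4) ≤ μ {x} :=
    ge_of_tendsto' h3 (fun n => key _ (by positivity))
  rw [hatom x] at hfin
  rw [nonpos_iff_eq_zero, ENNReal.ofReal_eq_zero] at hfin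
  linarith

end B5


noncomputable section B6
local notation "V" => EuclideanSpace ℝ (Fin 4)

variable {μ : Measure (EuclideanSpace ℝ (Fin 4))} [IsFiniteMeasure μ]

lemma Efun_boundary (hs : ∀ᵐ x ∂μ, ‖x‖ = 1) {r₀ : ℝ} (hr₀ : 0 < r₀) (hr₂ : r₀ < 2)
    (hball : ∀ c : V, (μ (Metric.closedBall c r₀)).toReal ≤ (μ Set.univ).toReal / 4)
    (a : V) (ha1 : 1 - r₀/2 ≤ ‖a‖) (ha : ‖a‖ < 1) :
    Efun μ a ≤ ((μ Set.univ).toReal / 2) * Real.log (1 - ‖a‖)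
      + ((μ Set.univ).toReal * Real.log 2
        - (3 * (μ Set.univ).toReal / 2) * Real.log (r₀/2)) := by
  set M := (μ Set.univ).toReal with hMdef
  have hM : 0 ≤ M := ENNReal.toReal_nonneg
  have hapos : 0 < ‖a‖ := by linarith
  have h1a : 0 < 1 - ‖a‖ := by linarith
  have h1r : 1 - ‖a‖ ≤ r₀ / 2 := by linarith
  set b : V := (-(‖a‖)⁻¹) • a with hbdef
  have hab : ‖a + b‖ = 1 - ‖a‖ := by
    have he : a + b = (1 - (‖a‖)⁻¹) • a := by
      rw [hbdef, sub_smul, one_smul, neg_smul]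
      abel
    rw [he, norm_smul, Real.norm_eq_abs]
    have hinv : 1 ≤ (‖a‖)⁻¹ := by
      rw [le_inv_comm₀ one_pos hapos]
      simpa using ha.le
    rw [abs_of_nonpos (by linarith)]
    field_simp
    ring
  set A : Set (EuclideanSpace ℝ (Fin 4)) := Metric.closedBall b r₀ with hAdef
  -- pointwise lower bound for log ∘ Dfun
  have hpt : ∀ x : V, ‖x‖ = 1 →
      2 * Real.log (r₀/2) + A.indicator
        (fun _ => 2 * Real.log (1 - ‖a‖) - 2 * Real.log (r₀/2)) x ≤ Real.log (Dfun a x) := by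
    intro x hx
    by_cases hxA : x ∈ A
    · rw [Set.indicator_of_mem hxA]
      have hlog : Real.log ((1 - ‖a‖) ^ 2) ≤ Real.log (Dfun a x) :=
        Real.log_le_log (by positivity) (Dfun_ge a x hx)
      rw [Real.log_pow] at hlog
      push_cast at hlog
      linarith
    · rw [Set.indicator_of_notMem hxA]
      have hdist : r₀ < ‖x - b‖ := by
        rw [hAdef, Metric.mem_closedBall, dist_eq_norm] at hxA
        push_neg at hxA
        exact hxA
      have hxa : r₀ / 2 ≤ ‖x + a‖ := by
        have h2 : ‖x - b‖ ≤ ‖x + a‖ + ‖a + b‖ := by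
          calc ‖x - b‖ = ‖(x + a) - (a + b)‖ := by abel_nf
          _ ≤ ‖x + a‖ + ‖a + b‖ := norm_sub_le _ _
        rw [hab] at h2
        linarith
      have hD2 : (r₀/2) ^ 2 ≤ Dfun a x := by
        rw [Dfun_eq a x hx]
        have := norm_nonneg (x + a)
        nlinarith
      have hlog : Real.log ((r₀/2) ^ 2) ≤ Real.log (Dfun a x) :=
        Real.log_le_log (by positivity) hD2
      rw [Real.log_pow] at hlog
      push_cast at hlog
      linarith
  -- integrability of the lower bound
  have hgint : Integrable (fun x : V => 2 * Real.log (r₀/2) + A.indicator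
      (fun _ => 2 * Real.log (1 - ‖a‖) - 2 * Real.log (r₀/2)) x) μ := by
    apply (integrable_const _).add
    exact (integrable_const _).indicator Metric.isClosed_closedBall.measurableSet
  have hmono : ∫ x, (2 * Real.log (r₀/2) + A.indicator
      (fun _ => 2 * Real.log (1 - ‖a‖) - 2 * Real.log (r₀/2)) x) ∂μ
      ≤ ∫ x, Real.log (Dfun a x) ∂μ := by
    apply integral_mono_ae hgint (integrable_logD hs a ha)
    filter_upwards [hs] with x hx
    exact hpt x hx
  have hgval : ∫ x, (2 * Real.log (r₀/2) + A.indicator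
      (fun _ => 2 * Real.log (1 - ‖a‖) - 2 * Real.log (r₀/2)) x) ∂μ
      = M * (2 * Real.log (r₀/2))
        + (μ A).toReal * (2 * Real.log (1 - ‖a‖) - 2 * Real.log (r₀/2)) := by
    rw [integral_add (integrable_const _)
      ((integrable_const _).indicator Metric.isClosed_closedBall.measurableSet),
      integral_const, integral_indicator_const _ Metric.isClosed_closedBall.measurableSet]
    simp [smul_eq_mul, mul_comm]
    rfl
  have hcoef : 2 * Real.log (1 - ‖a‖) - 2 * Real.log (r₀/2) ≤ 0 := by
    have := Real.log_le_log h1a h1r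
    linarith
  have hAle : (μ A).toReal ≤ M / 4 := hball b
  have hprod : (M / 4) * (2 * Real.log (1 - ‖a‖) - 2 * Real.log (r₀/2))
      ≤ (μ A).toReal * (2 * Real.log (1 - ‖a‖) - 2 * Real.log (r₀/2)) :=
    mul_le_mul_of_nonpos_right hAle hcoef
  have hIlow : M * (2 * Real.log (r₀/2))
      + (M / 4) * (2 * Real.log (1 - ‖a‖) - 2 * Real.log (r₀/2))
      ≤ ∫ x, Real.log (Dfun a x) ∂μ := by
    rw [hgval] at hmono
    linarith
  -- upper bound on the log (1 - ‖a‖²) term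
  have hsplit : Real.log (1 - ‖a‖ ^ 2) = Real.log (1 - ‖a‖) + Real.log (1 + ‖a‖) := by
    have : 1 - ‖a‖ ^ 2 = (1 - ‖a‖) * (1 + ‖a‖) := by ring
    rw [this, Real.log_mul (by linarith) (by linarith)]
  have hlog2 : Real.log (1 + ‖a‖) ≤ Real.log 2 := Real.log_le_log (by linarith) (by linarith)
  rw [Efun, ← hMdef]
  rw [hsplit]
  nlinarith [hIlow, mul_le_mul_of_nonneg_left hlog2 hM]

end B6

set_option linter.unusedSectionVars false in
lemma Efun_zero {μ : Measure (EuclideanSpace ℝ (Fin 4))} [IsFiniteMeasure μ] :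
    Efun μ 0 = 0 := by
  have hD : ∀ x : EuclideanSpace ℝ (Fin 4), Dfun (0 : EuclideanSpace ℝ (Fin 4)) x = 1 := by
    intro x; simp [Dfun]
  rw [Efun]
  simp [hD]

theorem exists_balancing_conformal_transformation'
    (μ : Measure (EuclideanSpace ℝ (Fin 4))) [IsFiniteMeasure μ] (hμ : μ ≠ 0)
    (hsupp : μ ({x : EuclideanSpace ℝ (Fin 4) | ‖x‖ = 1}ᶜ) = 0)
    (hatom : ∀ x : EuclideanSpace ℝ (Fin 4), μ {x} = 0) :
    ∃ a : EuclideanSpace ℝ (Fin 4), ‖a‖ < 1 ∧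
      (∫ x, (a + ((1 - ‖a‖ ^ 2) / (1 + 2 * ⟪a, x⟫ + ‖a‖ ^ 2)) • (x + a)) ∂μ)
        = 0 := by
  have hs : ∀ᵐ x ∂μ, ‖x‖ = 1 := by rw [ae_iff]; exact hsupp
  set M := (μ Set.univ).toReal with hMdef
  have hM : 0 < M :=
    ENNReal.toReal_pos (Measure.measure_univ_pos.mpr hμ).ne' (measure_ne_top μ _)
  obtain ⟨r₀, hr₀, hr₂, hball⟩ := exists_small_ball_radius hμ hsupp hatom
  set C : ℝ := M * Real.log 2 - (3 * M / 2) * Real.log (r₀/2) with hC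
  set t : ℝ := min (r₀/2) (Real.exp ((-C - 1) * 2 / M)) with ht
  have htpos : 0 < t := lt_min (by linarith) (Real.exp_pos _)
  have htr : t ≤ r₀/2 := min_le_left _ _
  set r : ℝ := 1 - t with hrdef
  have hrlt : r < 1 := by rw [hrdef]; linarith
  have hrpos : 0 ≤ r := by rw [hrdef]; linarith
  have hbdry : ∀ b : EuclideanSpace ℝ (Fin 4), r ≤ ‖b‖ → ‖b‖ < 1 → Efun μ b ≤ -1 := by
    intro b hb1 hb2
    have h1b : 1 - r₀/2 ≤ ‖b‖ := by rw [hrdef] at hb1; linarith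
    have hE := Efun_boundary hs hr₀ hr₂ hball b h1b hb2
    rw [← hMdef, ← hC] at hE
    have hlt : Real.log (1 - ‖b‖) ≤ (-C - 1) * 2 / M := by
      have h1 : 1 - ‖b‖ ≤ t := by rw [hrdef] at hb1; linarith
      have h2 : Real.log (1 - ‖b‖) ≤ Real.log t := Real.log_le_log (by linarith) h1
      have h3 : Real.log t ≤ (-C - 1) * 2 / M := by
        calc Real.log t ≤ Real.log (Real.exp ((-C - 1) * 2 / M)) :=
              Real.log_le_log htpos (min_le_right _ _)
        _ = (-C - 1) * 2 / M := Real.log_exp _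
      linarith
    have h4 : (M/2) * Real.log (1 - ‖b‖) ≤ (M/2) * ((-C - 1) * 2 / M) :=
      mul_le_mul_of_nonneg_left hlt (by linarith)
    have heq : (M/2) * ((-C - 1) * 2 / M) = -C - 1 := by field_simp
    linarith
  have hKc : IsCompact (Metric.closedBall (0 : EuclideanSpace ℝ (Fin 4)) r) :=
    isCompact_closedBall _ _
  have hcont : ContinuousOn (Efun μ) (Metric.closedBall (0 : EuclideanSpace ℝ (Fin 4)) r) := by
    intro z hz
    rw [Metric.mem_closedBall, dist_zero_right] at hz
    have hz1 : ‖z‖ < 1 := lt_of_le_of_lt hz hrlt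
    exact ((hasFDerivAt_Efun hs z hz1).differentiableAt.continuousAt).continuousWithinAt
  have h0mem : (0 : EuclideanSpace ℝ (Fin 4)) ∈ Metric.closedBall (0 : EuclideanSpace ℝ (Fin 4)) r := by
    rw [Metric.mem_closedBall, dist_self]; exact hrpos
  obtain ⟨a, haK, hmax⟩ := hKc.exists_isMaxOn ⟨0, h0mem⟩ hcont
  rw [Metric.mem_closedBall, dist_zero_right] at haK
  have ha1 : ‖a‖ < 1 := lt_of_le_of_lt haK hrlt
  have hE0 : (0:ℝ) ≤ Efun μ a := by
    have := isMaxOn_iff.mp hmax 0 h0mem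
    rw [Efun_zero] at this
    exact this
  have hloc : IsLocalMax (Efun μ) a := by
    have hball1 : Metric.ball (0 : EuclideanSpace ℝ (Fin 4)) 1 ∈ nhds a :=
      Metric.isOpen_ball.mem_nhds (by rw [Metric.mem_ball, dist_zero_right]; exact ha1)
    filter_upwards [hball1] with z hz
    rw [Metric.mem_ball, dist_zero_right] at hz
    rcases le_or_gt ‖z‖ r with hzr | hzr
    · exact isMaxOn_iff.mp hmax z (by rw [Metric.mem_closedBall, dist_zero_right]; exact hzr)
    · have := hbdry z hzr.le hz
      linarith
  have hzero := integral_psi_eq_zero_of_isLocalMax hs a ha1 hloc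
  unfold Dfun at hzero
  exact ⟨a, ha1, hzero⟩


/-- Balancing lemma: for any nonzero finite atomless Borel measure supported on the
unit sphere `S³ ⊂ ℝ⁴`, some conformal transformation `ψ_a` has vanishing center of
mass. -/
theorem exists_balancing_conformal_transformation
    (μ : Measure (EuclideanSpace ℝ (Fin 4))) [IsFiniteMeasure μ] (hμ : μ ≠ 0)
    (hsupp : μ ({x : EuclideanSpace ℝ (Fin 4) | ‖x‖ = 1}ᶜ) = 0)
    (hatom : ∀ x : EuclideanSpace ℝ (Fin 4), μ {x} = 0) :
    ∃ a : EuclideanSpace ℝ (Fin 4), ‖a‖ < 1 ∧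
      (∫ x, (a + ((1 - ‖a‖ ^ 2) / (1 + 2 * ⟪a, x⟫ + ‖a‖ ^ 2)) • (x + a)) ∂μ)
        = 0 := by
  exact exists_balancing_conformal_transformation' μ hμ hsupp hatom
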